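/- arXiv:1308.2768 — 3 statements merged into one kernel-verified Lean document; each statement's English description precedes it below -/
import Mathlib

section
/- Let $X_1,\ldots,X_m$ be independent real random variables, each having a density function bounded by $\alpha>0$. Then for all $\lambda>0$, $\Pr\left(\sum_{i=1}^m X_i^2 \le \lambda m\right) \le (6\alpha)^m \lambda^{m/2}$. -/
open MeasureTheory ProbabilityTheory Set Real
open scoped ENNReal NNReal

private theorem my_pi_mono {ι : Type*} [Fintype ι] {α : ι → Type*} [∀ i, MeasurableSpace (α i)]
    {μ ν : ∀ i, Measure (α i)} (h : ∀ i, μ i ≤ ν i) : Measure.pi μ ≤ Measure.pi ν := by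
  have key : (OuterMeasure.pi fun i => (μ i).toOuterMeasure) ≤
      OuterMeasure.pi fun i => (ν i).toOuterMeasure := by
    rw [OuterMeasure.pi, OuterMeasure.pi, OuterMeasure.le_boundedBy]
    intro t
    calc (OuterMeasure.pi fun i => (μ i).toOuterMeasure) t
        ≤ piPremeasure (fun i => (μ i).toOuterMeasure) t := OuterMeasure.boundedBy_le _
      _ ≤ piPremeasure (fun i => (ν i).toOuterMeasure) t := by
          refine Finset.prod_le_prod' fun i _ => ?_
          exact h i _
  refine Measure.le_iff.2 fun s hs => ?_
  rw [Measure.pi_def, Measure.pi_def, toMeasure_apply _ _ hs, toMeasure_apply _ _ hs]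
  exact key s

private theorem my_pi_smul {m : ℕ} (c : ℝ≥0) :
    (Measure.pi fun _ : Fin m => (c : ℝ≥0∞) • (volume : Measure ℝ)) =
      ((c : ℝ≥0∞)) ^ m • Measure.pi (fun _ : Fin m => (volume : Measure ℝ)) := by
  haveI : SigmaFinite ((c : ℝ≥0∞) • (volume : Measure ℝ)) := by
    rw [← ENNReal.smul_def]; infer_instance
  refine Measure.pi_eq (μ := fun _ : Fin m => (c : ℝ≥0∞) • (volume : Measure ℝ)) fun s hs => ?_
  simp only [Measure.smul_apply, Measure.pi_pi, smul_eq_mul, Measure.coe_smul, Pi.smul_apply]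
  rw [Finset.prod_mul_distrib, Finset.prod_const]
  simp

private theorem my_map_pi {Ω : Type*} [MeasurableSpace Ω] (μ : Measure Ω) [IsProbabilityMeasure μ]
    {m : ℕ} (X : Fin m → Ω → ℝ) (hmeas : ∀ i, Measurable (X i))
    (hindep : iIndepFun X μ) :
    μ.map (fun ω i => X i ω) = Measure.pi (fun i => μ.map (X i)) := by
  have htuple : Measurable (fun ω i => X i ω) := measurable_pi_lambda _ hmeas
  haveI : ∀ i, IsProbabilityMeasure (μ.map (X i)) := fun i =>
    Measure.isProbabilityMeasure_map (hmeas i).aemeasurable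
  refine Eq.symm (Measure.pi_eq (μ := fun i => μ.map (X i)) fun s hs => ?_)
  rw [Measure.map_apply htuple (MeasurableSet.univ_pi hs)]
  have hpre : (fun ω i => X i ω) ⁻¹' (Set.pi univ s) = ⋂ i ∈ Finset.univ, X i ⁻¹' s i := by
    ext ω; simp [Set.mem_pi]
  rw [hpre, hindep.measure_inter_preimage_eq_mul Finset.univ (fun i _ => hs i)]
  refine Finset.prod_congr rfl fun i _ => ?_
  rw [Measure.map_apply (hmeas i) (hs i)]

private theorem my_gamma_lb {x : ℝ} (hx : 0 < x) : (x / Real.exp 1) ^ x ≤ Real.Gamma (x + 1) := by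
  rw [Real.Gamma_eq_integral (by linarith : (0:ℝ) < x + 1)]
  have hsimp : ∀ t : ℝ, Real.exp (-t) * t ^ (x + 1 - 1) = Real.exp (-t) * t ^ x := by
    intro t; norm_num
  simp_rw [hsimp]
  have hint : IntegrableOn (fun t : ℝ => Real.exp (-t) * t ^ x) (Ioi 0) := by
    have := Real.GammaIntegral_convergent (by linarith : (0:ℝ) < x + 1)
    simpa [hsimp] using this
  have hsub : Ioi x ⊆ Ioi (0:ℝ) := Ioi_subset_Ioi hx.le
  have hint2 : IntegrableOn (fun t : ℝ => Real.exp (-t) * t ^ x) (Ioi x) := hint.mono_set hsub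
  have hint3 : IntegrableOn (fun t : ℝ => Real.exp (-t) * x ^ x) (Ioi x) := by
    have h := (exp_neg_integrableOn_Ioi x one_pos).mul_const (x ^ x)
    simpa [neg_one_mul, IntegrableOn] using h
  have step1 : ∫ t in Ioi x, Real.exp (-t) * x ^ x ≤ ∫ t in Ioi x, Real.exp (-t) * t ^ x := by
    refine setIntegral_mono_on hint3 hint2 measurableSet_Ioi fun t ht => ?_
    have : x ^ x ≤ t ^ x := Real.rpow_le_rpow hx.le (le_of_lt ht) hx.le
    exact mul_le_mul_of_nonneg_left this (Real.exp_nonneg _)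
  have step2 : ∫ t in Ioi x, Real.exp (-t) * t ^ x ≤ ∫ t in Ioi 0, Real.exp (-t) * t ^ x := by
    refine setIntegral_mono_set hint ?_ (HasSubset.Subset.eventuallyLE hsub)
    filter_upwards [ae_restrict_mem measurableSet_Ioi] with t ht
    exact mul_nonneg (Real.exp_nonneg _) (Real.rpow_nonneg (le_of_lt ht) _)
  have eval : ∫ t in Ioi x, Real.exp (-t) * x ^ x = (x / Real.exp 1) ^ x := by
    rw [integral_mul_const, integral_exp_neg_Ioi]
    rw [Real.div_rpow hx.le (Real.exp_nonneg _), Real.exp_one_rpow, Real.exp_neg,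
      div_eq_mul_inv, mul_comm]
  linarith [step1, step2, eval]

private theorem my_numeric {m : ℕ} (hm : 0 < m) {lam α : ℝ} (hα : 0 < α) (hlam : 0 < lam) :
    α ^ m * (Real.sqrt (lam * m) ^ m * (Real.sqrt Real.pi ^ m / Real.Gamma ((m : ℝ) / 2 + 1))) ≤
      (6 * α) ^ m * lam ^ ((m : ℝ) / 2) := by
  have hm' : (0:ℝ) < m := Nat.cast_pos.mpr hm
  set x : ℝ := (m : ℝ) / 2 with hxdef
  have hx : 0 < x := by positivity
  have hG : 0 < Real.Gamma (x + 1) := Real.Gamma_pos_of_pos (by linarith)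
  have hGlb : (x / Real.exp 1) ^ x ≤ Real.Gamma (x + 1) := my_gamma_lb hx
  have hrw : ∀ y : ℝ, 0 ≤ y → Real.sqrt y ^ m = y ^ x := by
    intro y hy
    rw [← Real.rpow_natCast (Real.sqrt y) m, Real.sqrt_eq_rpow, ← Real.rpow_mul hy]
    congr 1
    push_cast [hxdef]; ring
  have h1 : Real.sqrt (lam * m) ^ m = (lam * m) ^ x := hrw _ (by positivity)
  have h2 : Real.sqrt Real.pi ^ m = Real.pi ^ x := hrw _ Real.pi_pos.le
  have h6 : (6:ℝ) ^ m = 36 ^ x := by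
    rw [show (36:ℝ) = (6:ℝ) ^ (2:ℝ) by
        rw [show (2:ℝ) = ((2:ℕ):ℝ) by norm_num, Real.rpow_natCast]; norm_num,
      ← Real.rpow_natCast 6 m, ← Real.rpow_mul (by norm_num)]
    congr 1
    rw [hxdef]; ring
  have hpie : Real.pi * Real.exp 1 ≤ 18 := by
    nlinarith [Real.pi_lt_d2, Real.exp_one_lt_d9, Real.pi_pos, Real.exp_pos 1]
  have hbase : lam * m * Real.pi ≤ 36 * lam * (x / Real.exp 1) := by
    rw [show 36 * lam * (x / Real.exp 1) = 18 * lam * m / Real.exp 1 by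
        rw [hxdef]; field_simp; ring, le_div_iff₀ (Real.exp_pos 1)]
    nlinarith [mul_nonneg (mul_pos hlam hm').le (sub_nonneg.2 hpie)]
  have key : (lam * m) ^ x * Real.pi ^ x ≤ 36 ^ x * lam ^ x * Real.Gamma (x + 1) := by
    calc (lam * m) ^ x * Real.pi ^ x = (lam * m * Real.pi) ^ x := by
          rw [Real.mul_rpow (by positivity) Real.pi_pos.le]
      _ ≤ (36 * lam * (x / Real.exp 1)) ^ x :=
          Real.rpow_le_rpow (by positivity) hbase hx.le
      _ = 36 ^ x * lam ^ x * (x / Real.exp 1) ^ x := by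
          rw [Real.mul_rpow (by positivity) (by positivity),
            Real.mul_rpow (by norm_num) hlam.le]
      _ ≤ 36 ^ x * lam ^ x * Real.Gamma (x + 1) := by
          exact mul_le_mul_of_nonneg_left hGlb (by positivity)
  rw [mul_pow 6 α, h1, h2, h6]
  have hα' : (0:ℝ) ≤ α ^ m := by positivity
  calc α ^ m * ((lam * ↑m) ^ x * (Real.pi ^ x / Real.Gamma (x + 1)))
      ≤ α ^ m * (36 ^ x * lam ^ x) := by
        refine mul_le_mul_of_nonneg_left ?_ hα'
        rw [mul_div_assoc', div_le_iff₀ hG]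
        exact key
    _ = 36 ^ x * α ^ m * lam ^ x := by ring

/-- If `X 1, …, X m` are independent real random variables, each having a
density (w.r.t. Lebesgue measure) bounded by `α > 0`, then for all `λ > 0`,
`Pr(∑ Xᵢ² ≤ λ m) ≤ (6α)^m · λ^(m/2)`. -/
theorem small_ball_independent_bounded_density
    {Ω : Type*} [MeasurableSpace Ω] (μ : Measure Ω) [IsProbabilityMeasure μ]
    {m : ℕ} (hm : 0 < m) (X : Fin m → Ω → ℝ) (hmeas : ∀ i, Measurable (X i))
    (hindep : iIndepFun X μ)
    {α : ℝ} (hα : 0 < α) (f : Fin m → ℝ → ENNReal)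
    (hf : ∀ i x, f i x ≤ ENNReal.ofReal α)
    (hdens : ∀ i, μ.map (X i) = volume.withDensity (f i))
    {lam : ℝ} (hlam : 0 < lam) :
    μ {ω | ∑ i, (X i ω) ^ 2 ≤ lam * m} ≤
      ENNReal.ofReal ((6 * α) ^ m * lam ^ ((m : ℝ) / 2)) := by
  haveI : Nonempty (Fin m) := ⟨⟨0, hm⟩⟩
  set S : Set (Fin m → ℝ) := {x | ∑ i, x i ^ 2 ≤ lam * m} with hSdef
  have hS : MeasurableSet S := by
    apply measurableSet_le _ measurable_const
    exact Finset.measurable_sum _ fun i _ => (measurable_pi_apply i).pow_const 2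
  have htuple : Measurable (fun ω i => X i ω) := measurable_pi_lambda _ hmeas
  -- rewrite the event as the pushforward of S
  have hev : μ {ω | ∑ i, (X i ω) ^ 2 ≤ lam * m} = μ.map (fun ω i => X i ω) S := by
    rw [Measure.map_apply htuple hS]
    rfl
  -- each marginal is dominated by α • volume
  have hle : ∀ i, μ.map (X i) ≤ (ENNReal.ofReal α) • (volume : Measure ℝ) := by
    intro i
    rw [hdens i, ← withDensity_const]
    exact withDensity_mono (Filter.Eventually.of_forall (hf i))
  have hofReal : (ENNReal.ofReal α) = ((α.toNNReal : ℝ≥0) : ℝ≥0∞) := rfl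
  -- bound by the product of dominating measures
  have hbound : μ.map (fun ω i => X i ω) S ≤ (ENNReal.ofReal α) ^ m * volume S := by
    rw [my_map_pi μ X hmeas hindep]
    calc Measure.pi (fun i => μ.map (X i)) S
        ≤ Measure.pi (fun _ : Fin m => (ENNReal.ofReal α) • (volume : Measure ℝ)) S :=
          my_pi_mono hle S
      _ = (ENNReal.ofReal α) ^ m * volume S := by
          rw [hofReal, my_pi_smul α.toNNReal]
          rw [Measure.smul_apply, smul_eq_mul]
          congr 1
  -- compute the volume of S via the Euclidean ball
  set r : ℝ := Real.sqrt (lam * m) with hrdef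
  have hr : 0 ≤ r := Real.sqrt_nonneg _
  have hvol : volume S = (ENNReal.ofReal r) ^ m *
      ENNReal.ofReal (Real.sqrt Real.pi ^ m / Real.Gamma ((m : ℝ) / 2 + 1)) := by
    have hpre := (EuclideanSpace.volume_preserving_symm_measurableEquiv_toLp (Fin m)).measure_preimage
      hS.nullMeasurableSet
    have hball : (MeasurableEquiv.toLp 2 (Fin m → ℝ)).symm ⁻¹' S =
        Metric.closedBall (0 : EuclideanSpace ℝ (Fin m)) r := by
      ext y
      have hy : (MeasurableEquiv.toLp 2 (Fin m → ℝ)).symm y = fun i => y i := rfl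
      simp only [Set.mem_preimage, hy, hSdef, Set.mem_setOf_eq, mem_closedBall_zero_iff]
      rw [EuclideanSpace.norm_eq]
      have : ∀ i, ‖y i‖ ^ 2 = y i ^ 2 := fun i => by rw [Real.norm_eq_abs, sq_abs]
      simp_rw [this, hrdef]
      rw [show Real.sqrt (∑ i, y i ^ 2) ≤ Real.sqrt (lam * m) ↔ ∑ i, y i ^ 2 ≤ lam * m from
        Real.sqrt_le_sqrt_iff (by positivity)]
    rw [← hpre, hball, EuclideanSpace.volume_closedBall]
    simp [Fintype.card_fin]
  calc μ {ω | ∑ i, (X i ω) ^ 2 ≤ lam * m}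
      ≤ (ENNReal.ofReal α) ^ m * volume S := hev ▸ hbound
    _ = ENNReal.ofReal (α ^ m * (r ^ m * (Real.sqrt Real.pi ^ m /
          Real.Gamma ((m : ℝ) / 2 + 1)))) := by
        rw [hvol, ← ENNReal.ofReal_pow hα.le, ← ENNReal.ofReal_pow hr,
          ← ENNReal.ofReal_mul (by positivity), ← ENNReal.ofReal_mul (by positivity)]
    _ ≤ ENNReal.ofReal ((6 * α) ^ m * lam ^ ((m : ℝ) / 2)) :=
        ENNReal.ofReal_le_ofReal (my_numeric hm hα hlam)
end

section
/- Let $g = (g_1,\ldots,g_n)$ be a standard Gaussian vector and $X = \sqrt{n}\, g/\|g\|_2$. Then $\|\langle X, e_1\rangle\|_{\psi_2} \le 4$, and hence by rotation invariance $X$ satisfies a $\psi_2$ condition with constant $4$: $\|\langle X,a\rangle\|_{\psi_2} \le 4\|a\|_2$ for all $a \in \mathbb{R}^n$. -/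
open MeasureTheory

/-- The defining set of the `ψ_p` norm: constants `C > 0` with `E exp(|X|^p / C^p) ≤ 2`. -/
noncomputable def psiSet {Ω : Type*} [MeasurableSpace Ω] (p : ℝ) (X : Ω → ℝ)
    (μ : Measure Ω) : Set ℝ :=
  {C : ℝ | 0 < C ∧ ∫ ω, Real.exp (|X ω| ^ p / C ^ p) ∂μ ≤ 2}

/-- The `ψ_p` (Orlicz) norm `‖X‖_{ψ_p} = inf {C > 0 : E exp(|X|^p / C^p) ≤ 2}`. -/
noncomputable def psiNorm {Ω : Type*} [MeasurableSpace Ω] (p : ℝ) (X : Ω → ℝ)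
    (μ : Measure Ω) : ℝ :=
  sInf (psiSet p X μ)

open ProbabilityTheory

section SVP2Aux

open Real Finset

set_option linter.deprecated false


lemma gauss_lin (t : ℝ) :
    ∫⁻ x, ENNReal.ofReal (Real.exp (t * x)) ∂(gaussianReal 0 1)
      = ENNReal.ofReal (Real.exp (t ^ 2 / 2)) := by
  rw [gaussianReal_of_var_ne_zero 0 one_ne_zero]
  rw [lintegral_withDensity_eq_lintegral_mul _ (measurable_gaussianPDF 0 1)
    ((measurable_const_mul t).exp.ennreal_ofReal)]
  have hpt : ∀ x : ℝ, (gaussianPDF 0 1 * fun x => ENNReal.ofReal (rexp (t * x))) x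
      = ENNReal.ofReal (rexp (t ^ 2 / 2)) * ENNReal.ofReal (gaussianPDFReal t 1 x) := by
    intro x
    simp only [Pi.mul_apply, gaussianPDF]
    rw [← ENNReal.ofReal_mul (gaussianPDFReal_nonneg 0 1 x),
      ← ENNReal.ofReal_mul (Real.exp_nonneg _)]
    congr 1
    simp only [gaussianPDFReal, NNReal.coe_one, mul_one]
    have h2 : rexp (-(x - 0) ^ 2 / 2) * rexp (t * x)
        = rexp (t ^ 2 / 2) * rexp (-(x - t) ^ 2 / 2) := by
      rw [← Real.exp_add, ← Real.exp_add]; congr 1; ring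
    calc (√(2 * π))⁻¹ * rexp (-(x - 0) ^ 2 / 2) * rexp (t * x)
        = (√(2 * π))⁻¹ * (rexp (-(x - 0) ^ 2 / 2) * rexp (t * x)) := by ring
      _ = (√(2 * π))⁻¹ * (rexp (t ^ 2 / 2) * rexp (-(x - t) ^ 2 / 2)) := by rw [h2]
      _ = rexp (t ^ 2 / 2) * ((√(2 * π))⁻¹ * rexp (-(x - t) ^ 2 / 2)) := by ring
  simp_rw [hpt]
  rw [lintegral_const_mul _ (measurable_gaussianPDFReal t 1).ennreal_ofReal,
    lintegral_gaussianPDFReal_eq_one t one_ne_zero, mul_one]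

lemma gauss_sq {c : ℝ} (hc : c < 1 / 2) :
    ∫⁻ x, ENNReal.ofReal (Real.exp (c * x ^ 2)) ∂(gaussianReal 0 1)
      = ENNReal.ofReal (Real.sqrt (1 - 2 * c))⁻¹ := by
  have hb : (0 : ℝ) < 1 - 2 * c := by linarith
  have hbs : (0 : ℝ) < Real.sqrt (1 - 2 * c) := Real.sqrt_pos.mpr hb
  set v : NNReal := (1 - 2 * c)⁻¹.toNNReal with hv
  have hv0 : v ≠ 0 := by
    simp only [hv, ne_eq, Real.toNNReal_eq_zero, not_le]
    positivity
  have hvc : (v : ℝ) = (1 - 2 * c)⁻¹ := Real.coe_toNNReal _ (by positivity)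
  rw [gaussianReal_of_var_ne_zero 0 one_ne_zero]
  have hm : Measurable fun x : ℝ => ENNReal.ofReal (rexp (c * x ^ 2)) := by
    measurability
  rw [lintegral_withDensity_eq_lintegral_mul _ (measurable_gaussianPDF 0 1) hm]
  have hpt : ∀ x : ℝ, (gaussianPDF 0 1 * fun x => ENNReal.ofReal (rexp (c * x ^ 2))) x
      = ENNReal.ofReal (Real.sqrt (1 - 2 * c))⁻¹ * ENNReal.ofReal (gaussianPDFReal 0 v x) := by
    intro x
    simp only [Pi.mul_apply, gaussianPDF]
    rw [← ENNReal.ofReal_mul (gaussianPDFReal_nonneg 0 1 x),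
      ← ENNReal.ofReal_mul (by positivity)]
    congr 1
    simp only [gaussianPDFReal, NNReal.coe_one, mul_one, hvc]
    have h2 : rexp (-(x - 0) ^ 2 / 2) * rexp (c * x ^ 2)
        = rexp (-(x - 0) ^ 2 / (2 * (1 - 2 * c)⁻¹)) := by
      rw [← Real.exp_add]; congr 1; field_simp; ring
    have h3 : (√(2 * π))⁻¹ = (√(1 - 2 * c))⁻¹ * (√(2 * π * (1 - 2 * c)⁻¹))⁻¹ := by
      rw [Real.sqrt_mul (by positivity : (0:ℝ) ≤ 2 * π) (1 - 2 * c)⁻¹, Real.sqrt_inv]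
      have h2π : (0:ℝ) < √(2 * π) := Real.sqrt_pos.mpr (by positivity)
      field_simp
    calc (√(2 * π))⁻¹ * rexp (-(x - 0) ^ 2 / 2) * rexp (c * x ^ 2)
        = (√(2 * π))⁻¹ * (rexp (-(x - 0) ^ 2 / 2) * rexp (c * x ^ 2)) := by ring
      _ = (√(2 * π))⁻¹ * rexp (-(x - 0) ^ 2 / (2 * (1 - 2 * c)⁻¹)) := by rw [h2]
      _ = (√(1 - 2 * c))⁻¹ * ((√(2 * π * (1 - 2 * c)⁻¹))⁻¹
            * rexp (-(x - 0) ^ 2 / (2 * (1 - 2 * c)⁻¹))) := by rw [h3]; ring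
  simp_rw [hpt]
  rw [lintegral_const_mul _ (measurable_gaussianPDFReal 0 v).ennreal_ofReal,
    lintegral_gaussianPDFReal_eq_one 0 hv0, mul_one]

section SVP2GaussCor
variable {Ω : Type*} [MeasurableSpace Ω] {μ : Measure Ω} {f : Ω → ℝ}

lemma gauss_exp_integrable (hf : Measurable f) (hgauss : μ.map f = gaussianReal 0 1) (s : ℝ) :
    Integrable (fun ω => rexp (s * f ω)) μ := by
  refine ⟨((hf.const_mul s).exp).aestronglyMeasurable, ?_⟩
  rw [hasFiniteIntegral_iff_ofReal (ae_of_all _ fun ω => Real.exp_nonneg _)]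
  have h : ∫⁻ ω, ENNReal.ofReal (rexp (s * f ω)) ∂μ
      = ∫⁻ x, ENNReal.ofReal (rexp (s * x)) ∂(gaussianReal 0 1) := by
    rw [← hgauss, lintegral_map ((measurable_const_mul s).exp.ennreal_ofReal) hf]
  rw [h, gauss_lin]; exact ENNReal.ofReal_lt_top

lemma gauss_exp_integral (hf : Measurable f) (hgauss : μ.map f = gaussianReal 0 1) (s : ℝ) :
    ∫ ω, rexp (s * f ω) ∂μ = rexp (s ^ 2 / 2) := by
  rw [integral_eq_lintegral_of_nonneg_ae (ae_of_all _ fun ω => Real.exp_nonneg _)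
    ((hf.const_mul s).exp).aestronglyMeasurable]
  have h : ∫⁻ ω, ENNReal.ofReal (rexp (s * f ω)) ∂μ
      = ∫⁻ x, ENNReal.ofReal (rexp (s * x)) ∂(gaussianReal 0 1) := by
    rw [← hgauss, lintegral_map ((measurable_const_mul s).exp.ennreal_ofReal) hf]
  rw [h, gauss_lin, ENNReal.toReal_ofReal (Real.exp_nonneg _)]

lemma gauss_sq_integral (hf : Measurable f) (hgauss : μ.map f = gaussianReal 0 1)
    {c : ℝ} (hc : c < 1 / 2) :
    ∫ ω, rexp (c * f ω ^ 2) ∂μ = (Real.sqrt (1 - 2 * c))⁻¹ := by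
  have hm : Measurable fun x : ℝ => ENNReal.ofReal (rexp (c * x ^ 2)) := by measurability
  rw [integral_eq_lintegral_of_nonneg_ae (ae_of_all _ fun ω => Real.exp_nonneg _)
    (((hf.pow_const 2).const_mul c).exp).aestronglyMeasurable]
  have h : ∫⁻ ω, ENNReal.ofReal (rexp (c * f ω ^ 2)) ∂μ
      = ∫⁻ x, ENNReal.ofReal (rexp (c * x ^ 2)) ∂(gaussianReal 0 1) := by
    rw [← hgauss, lintegral_map hm hf]
  rw [h, gauss_sq hc, ENNReal.toReal_ofReal (by positivity)]

end SVP2GaussCor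

variable {Ω : Type*} [MeasurableSpace Ω] {μ : Measure Ω} [IsProbabilityMeasure μ]
  {n : ℕ} {g : Fin n → Ω → ℝ}

section T
variable (a : Fin n → ℝ)

lemma mgf_T (hmeas : ∀ i, Measurable (g i))
    (hindep : iIndepFun g μ)
    (hgauss : ∀ i, μ.map (g i) = gaussianReal 0 1) (t : ℝ) :
    mgf (∑ i, (fun x => a i * x) ∘ g i) μ t = rexp (t ^ 2 * (∑ i, (a i) ^ 2) / 2) := by
  have hXm : ∀ i, Measurable ((fun x => a i * x) ∘ g i) :=
    fun i => (measurable_const_mul _).comp (hmeas i)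
  rw [(hindep.comp (fun i x => a i * x) fun i => measurable_const_mul _).mgf_sum hXm Finset.univ]
  have h1 : ∀ i : Fin n, mgf ((fun x => a i * x) ∘ g i) μ t = rexp ((t * a i) ^ 2 / 2) := by
    intro i
    rw [mgf]
    have : ∀ ω, rexp (t * ((fun x => a i * x) ∘ g i) ω) = rexp ((t * a i) * g i ω) := by
      intro ω; simp only [Function.comp_apply]; ring_nf
    simp_rw [this]
    exact gauss_exp_integral (hmeas i) (hgauss i) _
  simp_rw [h1]
  rw [← Real.exp_sum]
  congr 1
  rw [← Finset.sum_div]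
  congr 1
  simp_rw [mul_pow]
  rw [← Finset.mul_sum]

lemma int_T (hmeas : ∀ i, Measurable (g i))
    (hindep : iIndepFun g μ)
    (hgauss : ∀ i, μ.map (g i) = gaussianReal 0 1) (t : ℝ) :
    Integrable (fun ω => rexp (t * (∑ i, (fun x => a i * x) ∘ g i) ω)) μ := by
  refine (hindep.comp (fun i x => a i * x) fun i => measurable_const_mul _).integrable_exp_mul_sum
    (fun i => (measurable_const_mul _).comp (hmeas i)) (fun i _ => ?_)
  have : ∀ ω, rexp (t * ((fun x => a i * x) ∘ g i) ω) = rexp ((t * a i) * g i ω) := by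
    intro ω; simp only [Function.comp_apply]; ring_nf
  simp_rw [this]
  exact gauss_exp_integrable (hmeas i) (hgauss i) _
end T

lemma chernoff_S (hmeas : ∀ i, Measurable (g i))
    (hindep : iIndepFun g μ)
    (hgauss : ∀ i, μ.map (g i) = gaussianReal 0 1) :
    (μ {ω | ∑ j, (g j ω) ^ 2 ≤ (n : ℝ) / 2}).toReal
      ≤ rexp ((n : ℝ) / 4) * ((Real.sqrt 2)⁻¹) ^ n := by
  set Q : Fin n → Ω → ℝ := fun i => (fun x : ℝ => x ^ 2) ∘ g i with hQ
  have hQm : ∀ i, Measurable (Q i) := fun i => (hmeas i).pow_const 2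
  have hQindep : iIndepFun Q μ :=
    hindep.comp (fun i x => x ^ 2) fun i => measurable_id.pow_const 2
  have hintQ : ∀ i, Integrable (fun ω => rexp (-(1/2) * Q i ω)) μ := by
    intro i
    refine Integrable.mono' (integrable_const 1) ((hQm i).const_mul _).exp.aestronglyMeasurable
      (ae_of_all _ fun ω => ?_)
    rw [Real.norm_eq_abs, Real.abs_exp, Real.exp_le_one_iff]
    have : (0:ℝ) ≤ Q i ω := by simp only [hQ, Function.comp_apply]; positivity
    nlinarith
  have hintS := hQindep.integrable_exp_mul_sum hQm (s := Finset.univ) (fun i _ => hintQ i)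
  have hset : {ω | (∑ i, Q i) ω ≤ (n : ℝ) / 2} = {ω | ∑ j, (g j ω) ^ 2 ≤ (n : ℝ) / 2} := by
    ext ω; simp [hQ, Finset.sum_apply]
  calc (μ {ω | ∑ j, (g j ω) ^ 2 ≤ (n : ℝ) / 2}).toReal
      = (μ {ω | (∑ i, Q i) ω ≤ (n : ℝ) / 2}).toReal := by rw [hset]
    _ ≤ rexp (-(-(1/2)) * ((n : ℝ)/2)) * mgf (∑ i, Q i) μ (-(1/2)) :=
        measure_le_le_exp_mul_mgf ((n : ℝ)/2) (by norm_num) hintS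
    _ = rexp ((n : ℝ) / 4) * ((Real.sqrt 2)⁻¹) ^ n := by
        rw [hQindep.mgf_sum hQm Finset.univ]
        have h1 : ∀ i : Fin n, mgf (Q i) μ (-(1/2)) = (Real.sqrt 2)⁻¹ := by
          intro i
          rw [mgf]
          have := gauss_sq_integral (hmeas i) (hgauss i) (c := -(1/2)) (by norm_num)
          rw [show (1 - 2 * -(1/2) : ℝ) = 2 by norm_num] at this
          exact this
        simp_rw [h1]
        rw [Finset.prod_const, Finset.card_univ, Fintype.card_fin]
        ring_nf


variable {Ω : Type*} [MeasurableSpace Ω] {μ : Measure Ω} [IsProbabilityMeasure μ]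
  {n : ℕ} {g : Fin n → Ω → ℝ}

lemma f1_lintegral (a : Fin n → ℝ) (hmeas : ∀ i, Measurable (g i))
    (hindep : iIndepFun g μ)
    (hgauss : ∀ i, μ.map (g i) = gaussianReal 0 1)
    (hA : 0 < ∑ i, (a i) ^ 2) :
    ∫⁻ ω, ENNReal.ofReal (rexp ((∑ i, a i * g i ω) ^ 2 / (8 * ∑ i, (a i) ^ 2))) ∂μ
      = ENNReal.ofReal (Real.sqrt (3 / 4))⁻¹ := by
  set A := ∑ i, (a i) ^ 2 with hAdef
  set Tf : Ω → ℝ := ∑ i, (fun x => a i * x) ∘ g i with hTf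
  have hTfa : ∀ ω, Tf ω = ∑ i, a i * g i ω := by
    intro ω; simp [hTf, Finset.sum_apply]
  have hTm : Measurable Tf := by
    have h : Tf = fun ω => ∑ i, a i * g i ω := funext hTfa
    rw [h]
    exact Finset.measurable_sum _ fun i _ => (hmeas i).const_mul _
  set c₀ : ℝ := (2 * Real.sqrt A)⁻¹ with hc₀
  have hsqA : Real.sqrt A ^ 2 = A := Real.sq_sqrt hA.le
  have key1 : ∀ x : ℝ, ((2 * Real.sqrt A)⁻¹ * x) ^ 2 / 2 = x ^ 2 / (8 * A) := by
    intro x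
    rw [mul_pow, inv_pow, mul_pow, hsqA, inv_mul_eq_div, div_div]
    ring_nf
  have key2 : ∀ x : ℝ, ((2 * Real.sqrt A)⁻¹ * x) ^ 2 * A / 2 = 1 / 8 * x ^ 2 := by
    intro x
    rw [mul_pow, inv_pow, mul_pow, hsqA, inv_mul_eq_div, div_mul_eq_mul_div, div_div]
    rw [div_eq_iff (by positivity : (2:ℝ)^2 * A * 2 ≠ 0)]
    ring
  have step_a : ∀ ω, ENNReal.ofReal (rexp ((∑ i, a i * g i ω) ^ 2 / (8 * A)))
      = ∫⁻ w, ENNReal.ofReal (rexp ((c₀ * Tf ω) * w)) ∂(gaussianReal 0 1) := by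
    intro ω
    rw [gauss_lin (c₀ * Tf ω)]
    congr 2
    rw [← hTfa ω, hc₀]
    exact (key1 (Tf ω)).symm
  simp_rw [step_a]
  rw [lintegral_lintegral_swap]
  · have step_c : ∀ w, ∫⁻ ω, ENNReal.ofReal (rexp (c₀ * Tf ω * w)) ∂μ
        = ENNReal.ofReal (rexp (1 / 8 * w ^ 2)) := by
      intro w
      have h1 : ∀ ω, ENNReal.ofReal (rexp (c₀ * Tf ω * w))
          = ENNReal.ofReal (rexp ((c₀ * w) * Tf ω)) := by
        intro ω; congr 2; ring
      simp_rw [h1]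
      rw [← ofReal_integral_eq_lintegral_ofReal (int_T a hmeas hindep hgauss (c₀ * w))
        (ae_of_all _ fun ω => Real.exp_nonneg _)]
      have h2 : ∫ ω, rexp ((c₀ * w) * Tf ω) ∂μ = mgf Tf μ (c₀ * w) := rfl
      rw [h2, hTf, mgf_T a hmeas hindep hgauss]
      congr 2
      rw [hc₀]
      exact key2 w
    simp_rw [step_c]
    rw [gauss_sq (by norm_num : (1:ℝ)/8 < 1/2)]
    norm_num
  · apply Measurable.aemeasurable
    exact ((((hTm.comp measurable_fst).const_mul c₀).mul measurable_snd).exp).ennreal_ofReal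


lemma numer {n : ℕ} (h12 : 12 ≤ n) :
    (Real.sqrt (3 / 4))⁻¹ + rexp ((n : ℝ) / 16) * (rexp ((n : ℝ) / 4)
      * ((Real.sqrt 2)⁻¹) ^ n) ≤ 2 := by
  have hs34 : (0.86 : ℝ) ≤ Real.sqrt (3 / 4) := by
    rw [Real.le_sqrt (by norm_num) (by norm_num)]; norm_num
  have hinv : (Real.sqrt (3 / 4))⁻¹ ≤ 50 / 43 := by
    have := inv_anti₀ (by norm_num : (0:ℝ) < 0.86) hs34
    calc (Real.sqrt (3/4))⁻¹ ≤ (0.86 : ℝ)⁻¹ := this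
      _ = 50 / 43 := by norm_num
  have hq : rexp ((n : ℝ) / 16) * (rexp ((n : ℝ) / 4) * ((Real.sqrt 2)⁻¹) ^ n)
      = (rexp (5 / 16) * (Real.sqrt 2)⁻¹) ^ n := by
    rw [← mul_assoc, ← Real.exp_add, mul_pow, ← Real.exp_nat_mul]
    congr 2
    push_cast
    ring
  have hsqrt2 : (0 : ℝ) < Real.sqrt 2 := Real.sqrt_pos.mpr (by norm_num)
  have hle2 : rexp (5 / 16) ≤ Real.sqrt 2 := by
    rw [Real.le_sqrt (Real.exp_nonneg _) (by norm_num), sq, ← Real.exp_add]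
    have := Real.log_two_gt_d9
    calc rexp (5 / 16 + 5 / 16) ≤ rexp (Real.log 2) :=
          Real.exp_le_exp.mpr (by norm_num; linarith)
      _ = 2 := Real.exp_log (by norm_num)
  have hq1 : rexp (5 / 16) * (Real.sqrt 2)⁻¹ ≤ 1 := by
    calc rexp (5 / 16) * (Real.sqrt 2)⁻¹ ≤ Real.sqrt 2 * (Real.sqrt 2)⁻¹ :=
          mul_le_mul_of_nonneg_right hle2 (by positivity)
      _ = 1 := mul_inv_cancel₀ hsqrt2.ne'
  have hqn : (rexp (5 / 16) * (Real.sqrt 2)⁻¹) ^ n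
      ≤ (rexp (5 / 16) * (Real.sqrt 2)⁻¹) ^ 12 :=
    pow_le_pow_of_le_one (by positivity) hq1 h12
  have he154 : rexp (15 / 4) ≤ 43.7 := by
    have h1 : rexp (15 / 4) * rexp (1 / 4) = rexp 4 := by
      rw [← Real.exp_add]; norm_num
    have h2 : rexp 4 ≤ 54.6 := by
      have h3 : rexp 4 = rexp 1 ^ 4 := by
        rw [← Real.exp_nat_mul]; norm_num
      rw [h3]
      calc rexp 1 ^ 4 ≤ 2.7182818286 ^ 4 :=
            pow_le_pow_left₀ (Real.exp_nonneg 1) Real.exp_one_lt_d9.le 4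
        _ ≤ 54.6 := by norm_num
    have h4 : (1.25 : ℝ) ≤ rexp (1 / 4) := by
      have := Real.add_one_le_exp (1 / 4 : ℝ); linarith
    nlinarith [Real.exp_pos (15 / 4 : ℝ)]
  have h12v : (rexp (5 / 16) * (Real.sqrt 2)⁻¹) ^ 12 ≤ 0.69 := by
    rw [mul_pow]
    have hs12 : (Real.sqrt 2)⁻¹ ^ 12 = 64⁻¹ := by
      rw [inv_pow, show (12 : ℕ) = 2 * 6 from rfl, pow_mul,
        Real.sq_sqrt (by norm_num : (0:ℝ) ≤ 2)]
      norm_num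
    have hexp12 : rexp (5 / 16) ^ 12 = rexp (15 / 4) := by
      rw [← Real.exp_nat_mul]; norm_num
    rw [hs12, hexp12]
    nlinarith
  calc (Real.sqrt (3 / 4))⁻¹ + rexp ((n : ℝ) / 16) * (rexp ((n : ℝ) / 4)
        * ((Real.sqrt 2)⁻¹) ^ n)
      ≤ 50 / 43 + (rexp (5 / 16) * (Real.sqrt 2)⁻¹) ^ n := by rw [hq]; linarith
    _ ≤ 50 / 43 + 0.69 := by linarith [hqn.trans h12v]
    _ ≤ 2 := by norm_num

lemma core {Ω : Type*} [MeasurableSpace Ω] {μ : Measure Ω} [IsProbabilityMeasure μ]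
    {n : ℕ} {g : Fin n → Ω → ℝ} (hmeas : ∀ i, Measurable (g i))
    (hindep : iIndepFun g μ)
    (hgauss : ∀ i, μ.map (g i) = gaussianReal 0 1) (a : Fin n → ℝ) :
    (psiSet 2 (fun ω => ∑ i, a i *
        (Real.sqrt n * g i ω / Real.sqrt (∑ j, (g j ω) ^ 2))) μ).Nonempty ∧
      psiNorm 2 (fun ω => ∑ i, a i *
        (Real.sqrt n * g i ω / Real.sqrt (∑ j, (g j ω) ^ 2))) μ ≤
          4 * Real.sqrt (∑ i, (a i) ^ 2) := by
  classical
  set Y : Ω → ℝ := fun ω => ∑ i, a i *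
    (Real.sqrt n * g i ω / Real.sqrt (∑ j, (g j ω) ^ 2)) with hYdef
  have hAnn : (0:ℝ) ≤ ∑ i, (a i) ^ 2 := Finset.sum_nonneg fun i _ => sq_nonneg _
  by_cases hA0 : ∑ i, (a i) ^ 2 = 0
  · -- degenerate case : a = 0
    have haz : ∀ i, a i = 0 := by
      intro i
      have h := (Finset.sum_eq_zero_iff_of_nonneg
        (fun i _ => sq_nonneg (a i))).mp hA0 i (Finset.mem_univ i)
      exact pow_eq_zero_iff two_ne_zero |>.mp h
    have hYz : Y = fun _ => (0:ℝ) := by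
      funext ω
      exact Finset.sum_eq_zero fun i _ => by rw [haz i, zero_mul]
    have hset : psiSet 2 Y μ = Set.Ioi (0:ℝ) := by
      ext C
      simp only [psiSet, Set.mem_setOf_eq, Set.mem_Ioi, hYz, abs_zero]
      rw [Real.zero_rpow (by norm_num : (2:ℝ) ≠ 0)]
      simp only [zero_div, Real.exp_zero, integral_const, measure_univ,
        ENNReal.toReal_one, smul_eq_mul, one_mul]
      exact and_iff_left (by norm_num)
    refine ⟨⟨1, by rw [hset]; exact Set.mem_Ioi.mpr one_pos⟩, ?_⟩
    rw [psiNorm, hset, csInf_Ioi, hA0, Real.sqrt_zero, mul_zero]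
  · have hApos : (0:ℝ) < ∑ i, (a i) ^ 2 := hAnn.lt_of_ne (Ne.symm hA0)
    set A : ℝ := ∑ i, (a i) ^ 2 with hAdef
    set S : Ω → ℝ := fun ω => ∑ j, (g j ω) ^ 2 with hSdef
    set T : Ω → ℝ := fun ω => ∑ i, a i * g i ω with hTdef
    have hSnn : ∀ ω, 0 ≤ S ω := fun ω => Finset.sum_nonneg fun j _ => sq_nonneg _
    have hSm : Measurable S := Finset.measurable_sum _ fun j _ => (hmeas j).pow_const 2
    have hTm : Measurable T := Finset.measurable_sum _ fun i _ => (hmeas i).const_mul _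
    have hYm : Measurable Y := by
      apply Finset.measurable_sum
      intro i _
      exact (((hmeas i).const_mul _).div
        (Real.continuous_sqrt.measurable.comp hSm)).const_mul _
    have hYT : ∀ ω, Y ω = Real.sqrt n * T ω / Real.sqrt (S ω) := by
      intro ω
      rw [hYdef]
      simp only
      rw [hTdef]
      simp only
      rw [Finset.mul_sum, Finset.sum_div]
      exact Finset.sum_congr rfl fun i _ => by ring
    have hY2 : ∀ ω, Y ω ^ 2 = n * T ω ^ 2 / S ω := by
      intro ω
      rw [hYT ω, div_pow, mul_pow, Real.sq_sqrt (Nat.cast_nonneg n),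
        Real.sq_sqrt (hSnn ω)]
    have hCS : ∀ ω, T ω ^ 2 ≤ A * S ω := fun ω =>
      Finset.sum_mul_sq_le_sq_mul_sq Finset.univ a (fun j => g j ω)
    have hYle : ∀ ω, Y ω ^ 2 ≤ n * A := by
      intro ω
      rw [hY2 ω]
      by_cases hs : S ω = 0
      · rw [hs, div_zero]; positivity
      · have hspos : 0 < S ω := (hSnn ω).lt_of_ne (Ne.symm hs)
        rw [div_le_iff₀ hspos]
        nlinarith [hCS ω, Nat.cast_nonneg (α := ℝ) n, sq_nonneg (T ω)]
    -- rewrite the integrand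
    have hrw : ∀ ω, |Y ω| ^ (2:ℝ) / (4 * Real.sqrt A) ^ (2:ℝ) = Y ω ^ 2 / (16 * A) := by
      intro ω
      rw [show (2:ℝ) = ((2:ℕ):ℝ) by norm_num, Real.rpow_natCast, Real.rpow_natCast, sq_abs]
      congr 1
      rw [mul_pow, Real.sq_sqrt hApos.le]
      norm_num
    have key : ∫ ω, rexp (|Y ω| ^ (2:ℝ) / (4 * Real.sqrt A) ^ (2:ℝ)) ∂μ ≤ 2 := by
      simp only [hrw]
      by_cases hcase : n ≤ 11
      · -- small n : pointwise bound
        have hb : ∀ ω, rexp (Y ω ^ 2 / (16 * A)) ≤ 2 := by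
          intro ω
          have h1 : Y ω ^ 2 / (16 * A) ≤ (n:ℝ) / 16 := by
            rw [div_le_div_iff₀ (by positivity) (by norm_num)]
            nlinarith [hYle ω]
          have hn11 : (n : ℝ) ≤ 11 := by exact_mod_cast hcase
          have h2 : Y ω ^ 2 / (16 * A) ≤ Real.log 2 := by
            have := Real.log_two_gt_d9; linarith
          calc rexp (Y ω ^ 2 / (16 * A)) ≤ rexp (Real.log 2) := Real.exp_le_exp.mpr h2
            _ = 2 := Real.exp_log (by norm_num)
        have hint : Integrable (fun ω => rexp (Y ω ^ 2 / (16 * A))) μ := by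
          refine Integrable.mono' (integrable_const 2)
            (((hYm.pow_const 2).div_const _).exp).aestronglyMeasurable
            (ae_of_all _ fun ω => ?_)
          rw [Real.norm_eq_abs, Real.abs_exp]
          exact hb ω
        calc ∫ ω, rexp (Y ω ^ 2 / (16 * A)) ∂μ ≤ ∫ _, (2:ℝ) ∂μ :=
              integral_mono hint (integrable_const 2) hb
          _ = 2 := by simp [measure_univ]
      · -- large n
        have h12 : 12 ≤ n := by omega
        rw [integral_eq_lintegral_of_nonneg_ae (ae_of_all _ fun ω => Real.exp_nonneg _)
          (((hYm.pow_const 2).div_const _).exp).aestronglyMeasurable]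
        set Ev : Set Ω := {ω | S ω ≤ (n:ℝ) / 2} with hEvdef
        have hEvm : MeasurableSet Ev := measurableSet_le hSm measurable_const
        have hpt : ∀ ω, ENNReal.ofReal (rexp (Y ω ^ 2 / (16 * A)))
            ≤ ENNReal.ofReal (rexp (T ω ^ 2 / (8 * A)))
              + Ev.indicator (fun _ => ENNReal.ofReal (rexp ((n:ℝ) / 16))) ω := by
          intro ω
          by_cases hev : ω ∈ Ev
          · rw [Set.indicator_of_mem hev]
            have h1 : Y ω ^ 2 / (16 * A) ≤ (n:ℝ) / 16 := by
              rw [div_le_div_iff₀ (by positivity) (by norm_num)]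
              nlinarith [hYle ω]
            exact le_add_left (ENNReal.ofReal_le_ofReal (Real.exp_le_exp.mpr h1))
          · rw [Set.indicator_of_notMem hev, add_zero]
            have hs2 : (n:ℝ) / 2 < S ω := lt_of_not_ge hev
            have hspos : 0 < S ω := lt_of_le_of_lt (by positivity) hs2
            have h0 : n * T ω ^ 2 / S ω ≤ 2 * T ω ^ 2 := by
              rw [div_le_iff₀ hspos]
              nlinarith [sq_nonneg (T ω)]
            have h1 : Y ω ^ 2 / (16 * A) ≤ T ω ^ 2 / (8 * A) := by
              rw [hY2 ω]
              calc n * T ω ^ 2 / S ω / (16 * A) ≤ 2 * T ω ^ 2 / (16 * A) := by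
                    exact (div_le_div_iff_of_pos_right (by positivity)).mpr h0
                _ = T ω ^ 2 / (8 * A) := by ring
            exact ENNReal.ofReal_le_ofReal (Real.exp_le_exp.mpr h1)
        have hEv_ne_top : μ Ev ≠ ⊤ := measure_ne_top μ _
        have hf1 : ∫⁻ ω, ENNReal.ofReal (rexp (T ω ^ 2 / (8 * A))) ∂μ
            = ENNReal.ofReal (Real.sqrt (3 / 4))⁻¹ :=
          f1_lintegral a hmeas hindep hgauss hApos
        have hlint : ∫⁻ ω, ENNReal.ofReal (rexp (Y ω ^ 2 / (16 * A))) ∂μ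
            ≤ ENNReal.ofReal ((Real.sqrt (3 / 4))⁻¹
                + rexp ((n:ℝ) / 16) * (μ Ev).toReal) := by
          calc ∫⁻ ω, ENNReal.ofReal (rexp (Y ω ^ 2 / (16 * A))) ∂μ
              ≤ ∫⁻ ω, (ENNReal.ofReal (rexp (T ω ^ 2 / (8 * A)))
                + Ev.indicator (fun _ => ENNReal.ofReal (rexp ((n:ℝ) / 16))) ω) ∂μ :=
                lintegral_mono hpt
            _ = (∫⁻ ω, ENNReal.ofReal (rexp (T ω ^ 2 / (8 * A))) ∂μ)
                + ∫⁻ ω, Ev.indicator (fun _ => ENNReal.ofReal (rexp ((n:ℝ) / 16))) ω ∂μ :=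
                lintegral_add_left (((hTm.pow_const 2).div_const _).exp).ennreal_ofReal _
            _ = ENNReal.ofReal (Real.sqrt (3 / 4))⁻¹
                + ENNReal.ofReal (rexp ((n:ℝ) / 16)) * μ Ev := by
                rw [hf1, lintegral_indicator_const hEvm]
            _ = ENNReal.ofReal ((Real.sqrt (3 / 4))⁻¹
                + rexp ((n:ℝ) / 16) * (μ Ev).toReal) := by
                rw [ENNReal.ofReal_add (by positivity) (by positivity),
                  ENNReal.ofReal_mul (Real.exp_nonneg _), ENNReal.ofReal_toReal hEv_ne_top]
        have hch : (μ Ev).toReal ≤ rexp ((n : ℝ) / 4) * ((Real.sqrt 2)⁻¹) ^ n :=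
          chernoff_S hmeas hindep hgauss
        calc (∫⁻ ω, ENNReal.ofReal (rexp (Y ω ^ 2 / (16 * A))) ∂μ).toReal
            ≤ (Real.sqrt (3 / 4))⁻¹ + rexp ((n:ℝ) / 16) * (μ Ev).toReal :=
              ENNReal.toReal_le_of_le_ofReal (by positivity) hlint
          _ ≤ (Real.sqrt (3 / 4))⁻¹ + rexp ((n:ℝ) / 16)
                * (rexp ((n : ℝ) / 4) * ((Real.sqrt 2)⁻¹) ^ n) := by
              have := mul_le_mul_of_nonneg_left hch (Real.exp_nonneg ((n:ℝ)/16))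
              linarith
          _ ≤ 2 := numer h12
    have hmem : 4 * Real.sqrt A ∈ psiSet 2 Y μ := ⟨by positivity, key⟩
    exact ⟨⟨_, hmem⟩, csInf_le ⟨0, fun x hx => hx.1.le⟩ hmem⟩

end SVP2Aux

set_option maxHeartbeats 1000000 in
/-- Let `g = (g₁,…,gₙ)` be a standard Gaussian vector and `X = √n · g / ‖g‖₂`.
Then `‖⟨X, e₁⟩‖_{ψ₂} ≤ 4`, and by rotation invariance `X` satisfies a `ψ₂` condition with
constant `4`: `‖⟨X, a⟩‖_{ψ₂} ≤ 4‖a‖₂` for all `a ∈ ℝⁿ`. -/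
theorem sphere_vector_psi2
    {Ω : Type*} [MeasurableSpace Ω] (μ : Measure Ω) [IsProbabilityMeasure μ]
    {n : ℕ} (hn : 0 < n) (g : Fin n → Ω → ℝ) (hmeas : ∀ i, Measurable (g i))
    (hindep : iIndepFun g μ)
    (hgauss : ∀ i, μ.map (g i) = gaussianReal 0 1) :
    ((psiSet 2 (fun ω => Real.sqrt n * g ⟨0, hn⟩ ω / Real.sqrt (∑ j, (g j ω) ^ 2)) μ).Nonempty ∧
      psiNorm 2 (fun ω => Real.sqrt n * g ⟨0, hn⟩ ω / Real.sqrt (∑ j, (g j ω) ^ 2)) μ ≤ 4) ∧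
    (∀ a : Fin n → ℝ,
      (psiSet 2 (fun ω => ∑ i, a i *
        (Real.sqrt n * g i ω / Real.sqrt (∑ j, (g j ω) ^ 2))) μ).Nonempty ∧
      psiNorm 2 (fun ω => ∑ i, a i *
        (Real.sqrt n * g i ω / Real.sqrt (∑ j, (g j ω) ^ 2))) μ ≤
          4 * Real.sqrt (∑ i, (a i) ^ 2)) := by
  classical
  refine ⟨?_, fun a => core hmeas hindep hgauss a⟩
  set i0 : Fin n := ⟨0, hn⟩
  set e : Fin n → ℝ := fun i => if i = i0 then 1 else 0 with he
  have hfun : (fun ω => Real.sqrt n * g i0 ω / Real.sqrt (∑ j, (g j ω) ^ 2))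
      = fun ω => ∑ i, e i * (Real.sqrt n * g i ω / Real.sqrt (∑ j, (g j ω) ^ 2)) := by
    funext ω
    rw [Finset.sum_congr rfl (fun i _ => by
      rw [he]; simp only [ite_mul, one_mul, zero_mul] :
        ∀ i ∈ Finset.univ, e i * (Real.sqrt n * g i ω / Real.sqrt (∑ j, (g j ω) ^ 2))
          = if i = i0 then Real.sqrt n * g i ω / Real.sqrt (∑ j, (g j ω) ^ 2) else 0)]
    rw [Finset.sum_ite_eq' Finset.univ i0]
    simp
  have hsum : ∑ i, (e i) ^ 2 = 1 := by
    rw [he]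
    rw [Finset.sum_congr rfl (fun i _ => by
      simp only [ite_pow, one_pow]; norm_num :
        ∀ i ∈ Finset.univ, (if i = i0 then (1:ℝ) else 0) ^ 2
          = if i = i0 then (1:ℝ) else 0)]
    rw [Finset.sum_ite_eq' Finset.univ i0]
    simp
  have h := core hmeas hindep hgauss e
  rw [hsum, Real.sqrt_one, mul_one] at h
  rw [hfun]
  exact h
end

section
/- Let $\Gamma$ be an $m\times n$ random matrix whose rows $\Gamma_1,\ldots,\Gamma_m$ are independent random vectors, each having a concentration property with constant $\alpha$: $\sup_L \Pr(|\langle\Gamma_i, x\rangle - L| < \varepsilon) \le \alpha\varepsilon$ for every $\varepsilon \ge 0$ and every unit vector $x$. Then for every unit vector $x \in S^{n-1}$ and every $\lambda > 0$, $\Pr(\|\Gamma x\|_2^2 < \lambda m) \le (6\alpha)^m \lambda^{m/2}$. -/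
open MeasureTheory ProbabilityTheory

open scoped ENNReal

lemma sbmc_geom_sum_val : HasSum (fun k : ℕ => ((k : ℝ) + 1) * Real.exp (-1) ^ k)
    ((1 - Real.exp (-1))⁻¹ ^ 2) := by
  set r := Real.exp (-1) with hr
  have hr0 : 0 ≤ r := (Real.exp_pos _).le
  have hr1 : r < 1 := Real.exp_lt_one_iff.mpr (by norm_num)
  have h1 : HasSum (fun k : ℕ => r ^ k) ((1 - r)⁻¹) := hasSum_geometric_of_lt_one hr0 hr1
  have h2 : HasSum (fun k : ℕ => (k : ℝ) * r ^ k) (r / (1 - r) ^ 2) :=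
    hasSum_coe_mul_geometric_of_norm_lt_one (by rwa [Real.norm_eq_abs, abs_of_nonneg hr0])
  have h3 := h2.add h1
  have hne : (1 : ℝ) - r ≠ 0 := by linarith
  convert h3 using 2 with k
  · ring
  · field_simp
    ring

lemma sbmc_row_bound {Ω : Type*} [MeasurableSpace Ω] (μ : Measure Ω) {Y : Ω → ℝ}
    (hY : Measurable Y) {α t : ℝ} (hα : 0 < α) (ht : 0 < t)
    (hconc : ∀ ε : ℝ, 0 ≤ ε → μ {ω | |Y ω| < ε} ≤ ENNReal.ofReal (α * ε)) :
    ∫⁻ ω, ENNReal.ofReal (Real.exp (-(t * Y ω ^ 2))) ∂μ ≤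
      ENNReal.ofReal (α / Real.sqrt t * (1 - Real.exp (-1))⁻¹ ^ 2) := by
  set r := Real.exp (-1) with hr
  set g : ℕ → Ω → ℝ≥0∞ := fun k =>
    ({ω | |Y ω| < Real.sqrt (((k : ℝ) + 1) / t)}).indicator (fun _ => ENNReal.ofReal (r ^ k))
    with hg
  have hset : ∀ k : ℕ, MeasurableSet {ω | |Y ω| < Real.sqrt (((k : ℝ) + 1) / t)} := fun k =>
    measurableSet_lt hY.abs measurable_const
  have hpt : ∀ ω, ENNReal.ofReal (Real.exp (-(t * Y ω ^ 2))) ≤ ∑' k, g k ω := by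
    intro ω
    set k0 := ⌊t * Y ω ^ 2⌋₊ with hk0
    have hnn : 0 ≤ t * Y ω ^ 2 := by positivity
    have h1 : t * Y ω ^ 2 < (k0 : ℝ) + 1 := Nat.lt_floor_add_one _
    have h2 : (k0 : ℝ) ≤ t * Y ω ^ 2 := Nat.floor_le hnn
    have hmem : ω ∈ {ω | |Y ω| < Real.sqrt (((k0 : ℝ) + 1) / t)} := by
      have hsq : Y ω ^ 2 < ((k0 : ℝ) + 1) / t := by
        rw [lt_div_iff₀ ht]; linarith [h1]
      have := Real.sqrt_lt_sqrt (by positivity) hsq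
      rwa [Real.sqrt_sq_eq_abs] at this
    refine le_trans ?_ (ENNReal.le_tsum k0)
    rw [hg]
    simp only [Set.indicator_of_mem hmem]
    apply ENNReal.ofReal_le_ofReal
    rw [hr, ← Real.exp_nat_mul]
    exact Real.exp_le_exp.mpr (by linarith)
  calc ∫⁻ ω, ENNReal.ofReal (Real.exp (-(t * Y ω ^ 2))) ∂μ
      ≤ ∫⁻ ω, ∑' k, g k ω ∂μ := lintegral_mono hpt
    _ = ∑' k, ∫⁻ ω, g k ω ∂μ := lintegral_tsum (fun k =>
        ((measurable_const.indicator (hset k)).aemeasurable))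
    _ ≤ ∑' k : ℕ, ENNReal.ofReal (α / Real.sqrt t * (((k : ℝ) + 1) * r ^ k)) := by
        refine ENNReal.tsum_le_tsum fun k => ?_
        rw [hg]
        rw [lintegral_indicator_const (hset k)]
        have hb := hconc (Real.sqrt (((k : ℝ) + 1) / t)) (Real.sqrt_nonneg _)
        refine le_trans (mul_le_mul_right hb _) ?_
        rw [← ENNReal.ofReal_mul (by positivity)]
        apply ENNReal.ofReal_le_ofReal
        have hs : Real.sqrt (((k : ℝ) + 1) / t) ≤ ((k : ℝ) + 1) / Real.sqrt t := by
          rw [Real.sqrt_div (by positivity)]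
          gcongr
          rw [Real.sqrt_le_iff]
          refine ⟨by positivity, ?_⟩
          nlinarith [Nat.cast_nonneg (α := ℝ) k]
        have hrk : 0 ≤ r ^ k := by positivity
        calc r ^ k * (α * Real.sqrt (((k : ℝ) + 1) / t))
            ≤ r ^ k * (α * (((k : ℝ) + 1) / Real.sqrt t)) := by
              apply mul_le_mul_of_nonneg_left _ hrk
              exact mul_le_mul_of_nonneg_left hs hα.le
          _ = α / Real.sqrt t * (((k : ℝ) + 1) * r ^ k) := by ring
    _ = ENNReal.ofReal (α / Real.sqrt t * (1 - r)⁻¹ ^ 2) := by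
        rw [← ENNReal.ofReal_tsum_of_nonneg (fun k => by positivity)
          (sbmc_geom_sum_val.summable.mul_left _)]
        congr 1
        rw [tsum_mul_left, sbmc_geom_sum_val.tsum_eq]

lemma sbmc_numeric_bound : Real.exp (1/2) * Real.sqrt 2 * (1 - Real.exp (-1))⁻¹ ^ 2 ≤ 6 := by
  have h1 : Real.exp 1 < 2.7182818286 := Real.exp_one_lt_d9
  have h2 : 2.7182818283 < Real.exp 1 := Real.exp_one_gt_d9
  have he : Real.exp (-1) = (Real.exp 1)⁻¹ := by rw [← Real.exp_neg]
  have hep : (0:ℝ) < Real.exp 1 := Real.exp_pos 1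
  have hi : Real.exp (-1) < 0.3678795 := by
    rw [he]
    rw [inv_lt_comm₀ hep (by norm_num)]
    linarith
  have hi0 : 0 < Real.exp (-1) := Real.exp_pos _
  have hu : (0.6321205:ℝ) < 1 - Real.exp (-1) := by linarith
  have hu0 : (0:ℝ) < 1 - Real.exp (-1) := by linarith
  have huinv : (1 - Real.exp (-1))⁻¹ < 0.6321205⁻¹ :=
    inv_strictAnti₀ (by norm_num) hu
  have huinv0 : 0 < (1 - Real.exp (-1))⁻¹ := by positivity
  have hsq : Real.sqrt 2 ^ 2 = 2 := Real.sq_sqrt (by norm_num)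
  have hsq0 : 0 ≤ Real.sqrt 2 := Real.sqrt_nonneg 2
  have hs : Real.sqrt 2 < 1.41421357 := by nlinarith
  have hh : Real.exp (1/2) ^ 2 = Real.exp 1 := by
    rw [sq, ← Real.exp_add]; norm_num
  have hh0 : 0 < Real.exp (1/2) := Real.exp_pos _
  have hhe : Real.exp (1/2) < 1.6487213 := by nlinarith
  have huinv' : (1 - Real.exp (-1))⁻¹ < 1.58197686 := by
    calc (1 - Real.exp (-1))⁻¹ < 0.6321205⁻¹ := huinv
    _ ≤ 1.58197686 := by norm_num
  have hC2 : (1 - Real.exp (-1))⁻¹ ^ 2 < 2.5026508 := by nlinarith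
  have hAB : Real.exp (1/2) * Real.sqrt 2 < 2.3316505 := by nlinarith
  have hAB0 : 0 < Real.exp (1/2) * Real.sqrt 2 := by positivity
  nlinarith

lemma sbmc_lintegral_prod_of_iIndep {Ω ι : Type*} [MeasurableSpace Ω] {μ : Measure Ω}
    [IsProbabilityMeasure μ] {F : ι → Ω → ℝ≥0∞} (hFmeas : ∀ i, Measurable (F i))
    (hFindep : iIndepFun F μ) (s : Finset ι) :
    ∫⁻ ω, ∏ i ∈ s, F i ω ∂μ = ∏ i ∈ s, ∫⁻ ω, F i ω ∂μ := by
  classical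
  induction s using Finset.induction_on with
  | empty => simp
  | @insert a s ha ih =>
    have hindep2 : IndepFun (∏ j ∈ s, F j) (F a) μ :=
      hFindep.indepFun_finsetProd_of_notMem hFmeas ha
    have hmeasprod : Measurable (∏ j ∈ s, F j) := by
      rw [Finset.prod_fn]
      exact Finset.measurable_prod s fun i _ => hFmeas i
    have key := lintegral_mul_eq_lintegral_mul_lintegral_of_indepFun (hFmeas a) hmeasprod
      hindep2.symm
    simp_rw [Finset.prod_insert ha]
    have e1 : ∀ ω, F a ω * ∏ i ∈ s, F i ω = (F a * ∏ j ∈ s, F j) ω := fun ω => by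
      simp [Finset.prod_apply]
    simp_rw [e1]
    rw [key]
    congr 1
    rw [← ih]
    exact lintegral_congr fun ω => by simp [Finset.prod_apply]

lemma sbmc_final_arith {α lam : ℝ} (hα : 0 < α) (hlam : 0 < lam) (m : ℕ) :
    Real.exp ((2*lam)⁻¹ * (lam * m)) *
      (α / Real.sqrt ((2*lam)⁻¹) * (1 - Real.exp (-1))⁻¹ ^ 2) ^ m
      ≤ (6 * α) ^ m * lam ^ ((m : ℝ) / 2) := by
  set c := (1 - Real.exp (-1))⁻¹ ^ 2 with hc
  have hc0 : 0 < c := by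
    have : 0 < 1 - Real.exp (-1) := by
      have := Real.exp_lt_one_iff.mpr (show (-1:ℝ) < 0 by norm_num)
      linarith
    positivity
  have hsl : 0 < Real.sqrt lam := Real.sqrt_pos.mpr hlam
  have hs2 : 0 < Real.sqrt 2 := Real.sqrt_pos.mpr (by norm_num)
  have h1 : (2*lam)⁻¹ * (lam * m) = (m : ℕ) * ((1:ℝ)/2) := by
    field_simp
  rw [h1, Real.exp_nat_mul]
  have h2 : α / Real.sqrt ((2*lam)⁻¹) = α * (Real.sqrt 2 * Real.sqrt lam) := by
    rw [Real.sqrt_inv, Real.sqrt_mul (by norm_num : (0:ℝ) ≤ 2)]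
    field_simp
  rw [h2]
  have h4 : lam ^ ((m : ℝ) / 2) = Real.sqrt lam ^ m := by
    rw [Real.sqrt_eq_rpow, ← Real.rpow_natCast (lam ^ ((1:ℝ)/2)) m,
      ← Real.rpow_mul hlam.le]
    congr 1
    push_cast
    ring
  rw [h4, ← mul_pow, ← mul_pow]
  apply pow_le_pow_left₀ (by positivity)
  have key : Real.exp (1/2) * (α * (Real.sqrt 2 * Real.sqrt lam) * c) =
      (Real.exp (1/2) * Real.sqrt 2 * c) * (α * Real.sqrt lam) := by ring
  rw [key]
  have : (Real.exp (1/2) * Real.sqrt 2 * c) * (α * Real.sqrt lam)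
      ≤ 6 * (α * Real.sqrt lam) :=
    mul_le_mul_of_nonneg_right sbmc_numeric_bound (by positivity)
  calc (Real.exp (1/2) * Real.sqrt 2 * c) * (α * Real.sqrt lam)
      ≤ 6 * (α * Real.sqrt lam) := this
    _ = 6 * α * Real.sqrt lam := by ring

/-- If `Γ` is an `m × n` random matrix whose rows `Γ₁,…,Γ_m` are independent
random vectors, each having a concentration property with constant `α`
(`sup_L Pr(|⟨Γᵢ,x⟩ - L| < ε) ≤ αε` for all `ε ≥ 0` and unit vectors `x`), then for every unit
vector `x` and `λ > 0`, `Pr(‖Γx‖₂² < λm) ≤ (6α)^m λ^(m/2)`. -/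
theorem small_ball_matrix_concentration_rows
    {Ω : Type*} [MeasurableSpace Ω] (μ : Measure Ω) [IsProbabilityMeasure μ]
    {m n : ℕ} (hm : 0 < m) (Γ : Fin m → Ω → (Fin n → ℝ)) (hmeas : ∀ i, Measurable (Γ i))
    (hindep : iIndepFun Γ μ)
    {α : ℝ} (hα : 0 < α)
    (hconc : ∀ i, ∀ x : Fin n → ℝ, ∑ j, (x j) ^ 2 = 1 → ∀ ε : ℝ, 0 ≤ ε → ∀ L : ℝ,
      μ {ω | |(∑ j, Γ i ω j * x j) - L| < ε} ≤ ENNReal.ofReal (α * ε)) :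
    ∀ x : Fin n → ℝ, ∑ j, (x j) ^ 2 = 1 → ∀ lam : ℝ, 0 < lam →
      μ {ω | ∑ i, (∑ j, Γ i ω j * x j) ^ 2 < lam * m} ≤
        ENNReal.ofReal ((6 * α) ^ m * lam ^ ((m : ℝ) / 2)) := by
  intro x hx lam hlam
  set t : ℝ := (2 * lam)⁻¹ with htdef
  have ht : 0 < t := by positivity
  set Y : Fin m → Ω → ℝ := fun i ω => ∑ j, Γ i ω j * x j with hY
  have hYmeas : ∀ i, Measurable (Y i) := fun i =>
    Finset.measurable_sum _ fun j _ => ((measurable_pi_apply j).comp (hmeas i)).mul_const _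
  have hYindep : iIndepFun Y μ :=
    hindep.comp (fun _ v => ∑ j, v j * x j)
      (fun _ => Finset.measurable_sum _ fun j _ => (measurable_pi_apply j).mul_const _)
  set F : Fin m → Ω → ℝ≥0∞ := fun i ω => ENNReal.ofReal (Real.exp (-(t * Y i ω ^ 2))) with hF
  have hFmeas : ∀ i, Measurable (F i) := fun i =>
    ENNReal.measurable_ofReal.comp
      (Real.measurable_exp.comp ((((hYmeas i).pow_const 2).const_mul t).neg))
  have hFindep : iIndepFun F μ :=
    hYindep.comp (fun _ y => ENNReal.ofReal (Real.exp (-(t * y ^ 2))))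
      (fun _ => ENNReal.measurable_ofReal.comp
        (Real.measurable_exp.comp (((measurable_id.pow_const 2).const_mul t).neg)))
  -- product identity pointwise
  have hprodpt : ∀ ω, (∏ i, F i ω) = ENNReal.ofReal (Real.exp (-(t * ∑ i, Y i ω ^ 2))) := by
    intro ω
    rw [hF]
    rw [← ENNReal.ofReal_prod_of_nonneg (fun i _ => (Real.exp_pos _).le)]
    congr 1
    rw [← Real.exp_sum]
    congr 1
    rw [Finset.mul_sum, ← Finset.sum_neg_distrib]
  set ε : ℝ≥0∞ := ENNReal.ofReal (Real.exp (-(t * (lam * m)))) with hε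
  have hε0 : ε ≠ 0 := by
    rw [hε]
    simp [ENNReal.ofReal_eq_zero, not_le, Real.exp_pos]
  have hεtop : ε ≠ ⊤ := ENNReal.ofReal_ne_top
  -- Markov
  have hsub : {ω | ∑ i, Y i ω ^ 2 < lam * m} ⊆ {ω | ε ≤ ∏ i, F i ω} := by
    intro ω hω
    simp only [Set.mem_setOf_eq] at hω ⊢
    rw [hprodpt ω, hε]
    apply ENNReal.ofReal_le_ofReal
    apply Real.exp_le_exp.mpr
    nlinarith
  have hmar := mul_meas_ge_le_lintegral₀ (μ := μ)
    (f := fun ω => ∏ i, F i ω) (by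
      apply Measurable.aemeasurable
      exact Finset.measurable_prod _ fun i _ => hFmeas i) ε
  have hprodint : ∫⁻ ω, ∏ i, F i ω ∂μ ≤
      ENNReal.ofReal (α / Real.sqrt t * (1 - Real.exp (-1))⁻¹ ^ 2) ^ m := by
    rw [sbmc_lintegral_prod_of_iIndep hFmeas hFindep Finset.univ]
    have hrow : ∀ i, ∫⁻ ω, F i ω ∂μ ≤
        ENNReal.ofReal (α / Real.sqrt t * (1 - Real.exp (-1))⁻¹ ^ 2) := by
      intro i
      apply sbmc_row_bound μ (hYmeas i) hα ht
      intro e he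
      have := hconc i x hx e he 0
      simpa [hY, sub_zero] using this
    calc ∏ i, ∫⁻ ω, F i ω ∂μ
        ≤ ∏ _i : Fin m, ENNReal.ofReal (α / Real.sqrt t * (1 - Real.exp (-1))⁻¹ ^ 2) :=
          Finset.prod_le_prod' fun i _ => hrow i
      _ = ENNReal.ofReal (α / Real.sqrt t * (1 - Real.exp (-1))⁻¹ ^ 2) ^ m := by
          rw [Finset.prod_const, Finset.card_univ, Fintype.card_fin]
  have hμle : μ {ω | ∑ i, Y i ω ^ 2 < lam * m} ≤ ε⁻¹ *
      ENNReal.ofReal (α / Real.sqrt t * (1 - Real.exp (-1))⁻¹ ^ 2) ^ m := by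
    have h1 : μ {ω | ∑ i, Y i ω ^ 2 < lam * m} ≤ μ {ω | ε ≤ ∏ i, F i ω} := measure_mono hsub
    have h2 : ε * μ {ω | ∑ i, Y i ω ^ 2 < lam * m} ≤
        ENNReal.ofReal (α / Real.sqrt t * (1 - Real.exp (-1))⁻¹ ^ 2) ^ m :=
      le_trans (le_trans (mul_le_mul_right h1 ε) hmar) hprodint
    calc μ {ω | ∑ i, Y i ω ^ 2 < lam * m}
        = ε⁻¹ * (ε * μ {ω | ∑ i, Y i ω ^ 2 < lam * m}) := by
          rw [← mul_assoc, ENNReal.inv_mul_cancel hε0 hεtop, one_mul]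
      _ ≤ _ := mul_le_mul_right h2 _
  have hεinv : ε⁻¹ = ENNReal.ofReal (Real.exp (t * (lam * m))) := by
    rw [hε, Real.exp_neg, ENNReal.ofReal_inv_of_pos (Real.exp_pos _), inv_inv]
  have hB0 : 0 ≤ α / Real.sqrt t * (1 - Real.exp (-1))⁻¹ ^ 2 := by positivity
  refine le_trans hμle ?_
  rw [hεinv, ← ENNReal.ofReal_pow hB0, ← ENNReal.ofReal_mul (Real.exp_pos _).le]
  exact ENNReal.ofReal_le_ofReal (sbmc_final_arith hα hlam m)
end
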